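/- As n → ∞, LCI_n/n converges almost surely to e_max := max_{λ∈Λ²} Σ_{i=1}^m min(p^X_i λ^X_i, p^Y_i λ^Y_i), and moreover E[LCI_n]/n converges to e_max. -/

import Mathlib

open MeasureTheory ProbabilityTheory Filter Finset Topology

noncomputable section

attribute [local instance] Classical.propDecidable

/-- Length of the longest common weakly increasing subsequence of `X_0,…,X_{n-1}` and
`Y_0,…,Y_{n-1}`. -/
def LCI (m n : ℕ) (X Y : ℕ → Fin m) : ℕ :=
  sSup {r : ℕ | ∃ i j : Fin r → ℕ, StrictMono i ∧ StrictMono j ∧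
    (∀ s, i s < n) ∧ (∀ s, j s < n) ∧
    (∀ s, X (i s) = Y (j s)) ∧ Monotone (X ∘ i) ∧ Monotone (Y ∘ j)}

/-- `X` and `Y` are independent sequences of i.i.d. random variables with values in `Fin m`
and respective probability mass functions `pX` and `pY`; all the variables (from both
sequences) form an independent family. -/
def IIDPair {Ω : Type*} [MeasurableSpace Ω] (P : Measure Ω) {m : ℕ}
    (X Y : ℕ → Ω → Fin m) (pX pY : Fin m → ℝ) : Prop :=
  (∀ k, Measurable (X k)) ∧ (∀ k, Measurable (Y k)) ∧
  (∀ k i, P (X k ⁻¹' {i}) = ENNReal.ofReal (pX i)) ∧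
  (∀ k i, P (Y k ⁻¹' {i}) = ENNReal.ofReal (pY i)) ∧
  iIndepFun (Sum.elim X Y) P

/-- `B` is a Brownian motion on `[0,1]` with covariance matrix `C`: continuous paths,
`B 0 = 0`, independent increments, and for `0 ≤ s ≤ t ≤ 1` the increment `B t - B s` is a
centered Gaussian vector with covariance `(t - s) • C` (characterized through its
one-dimensional linear projections). -/
def IsBM {Ω : Type*} [MeasurableSpace Ω] (P : Measure Ω) {ι : Type*} [Fintype ι]
    (B : ℝ → Ω → ι → ℝ) (C : ι → ι → ℝ) : Prop :=
  (∀ t, Measurable (B t)) ∧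
  (∀ ω, ContinuousOn (fun t => B t ω) (Set.Icc 0 1)) ∧
  (∀ ω, B 0 ω = 0) ∧
  (∀ n : ℕ, ∀ t : Fin (n + 1) → ℝ, Monotone t → (∀ j, t j ∈ Set.Icc (0 : ℝ) 1) →
    iIndepFun
      (fun j : Fin n => fun ω => B (t j.succ) ω - B (t j.castSucc) ω) P) ∧
  (∀ s t : ℝ, 0 ≤ s → s ≤ t → t ≤ 1 → ∀ a : ι → ℝ,
    P.map (fun ω => ∑ i, a i * (B t ω i - B s ω i)) =
      gaussianReal 0 (((t - s) * ∑ i, ∑ j, a i * C i j * a j)).toNNReal)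

/-- Convergence in distribution (weak convergence of the laws), characterized by convergence
of the expectations of bounded continuous functions. -/
def TendstoInDistribution {Ω Ω' : Type*} [MeasurableSpace Ω] [MeasurableSpace Ω']
    (P : Measure Ω) (Z : ℕ → Ω → ℝ) (Q : Measure Ω') (W : Ω' → ℝ) : Prop :=
  ∀ f : BoundedContinuousFunction ℝ ℝ,
    Tendsto (fun n => ∫ ω, f (Z n ω) ∂P) atTop (𝓝 (∫ ω, f (W ω) ∂Q))

/-- The simplex `Λ` of probability vectors on `{1,…,m}`. -/
def Lam (m : ℕ) : Set (Fin m → ℝ) := {l | (∀ i, 0 ≤ l i) ∧ ∑ i, l i = 1}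

/-- `f(λ^X, λ^Y) = Σ_i min (p^X_i λ^X_i) (p^Y_i λ^Y_i)`. -/
def fobj {m : ℕ} (pX pY : Fin m → ℝ) (l : (Fin m → ℝ) × (Fin m → ℝ)) : ℝ :=
  ∑ i, min (pX i * l.1 i) (pY i * l.2 i)

/-- `e_max`, the maximum of `f` over `Λ²`. -/
def emax {m : ℕ} (pX pY : Fin m → ℝ) : ℝ :=
  sSup (fobj pX pY '' (Lam m ×ˢ Lam m))

/-- The set `U`. -/
def Uset {m : ℕ} (pX pY : Fin m → ℝ) : Set (Fin m → ℝ) :=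
  {u | (∀ i, 0 ≤ u i) ∧ (∑ i, u i / pX i) ≤ 1 ∧ (∑ i, u i / pY i) ≤ 1}

/-- The set `L_U` of maximizers of `φ(u) = Σ_i u_i` over `U`. -/
def LU {m : ℕ} (pX pY : Fin m → ℝ) : Set (Fin m → ℝ) :=
  {u ∈ Uset pX pY | ∑ i, u i = emax pX pY}

/-- The set `I` of letters usable in a maximizer. -/
def Iset {m : ℕ} (pX pY : Fin m → ℝ) : Set (Fin m) :=
  {i | ∃ u ∈ LU pX pY, 0 < u i}

/-- Case a): some maximizer saturates the `X` constraint but not the `Y` one. -/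
def CaseA {m : ℕ} (pX pY : Fin m → ℝ) : Prop :=
  ∃ u ∈ LU pX pY, (∑ i, u i / pX i) = 1 ∧ (∑ i, u i / pY i) < 1

/-- Case b): every maximizer saturates both constraints. -/
def CaseB {m : ℕ} (pX pY : Fin m → ℝ) : Prop :=
  ∀ u ∈ LU pX pY, (∑ i, u i / pX i) = 1 ∧ (∑ i, u i / pY i) = 1

/-- Case b1): Case b) and the vectors `(1/p^X_i)_{i∈I}` and `(1/p^Y_i)_{i∈I}` coincide. -/
def CaseB1 {m : ℕ} (pX pY : Fin m → ℝ) : Prop :=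
  CaseB pX pY ∧ ∀ i ∈ Iset pX pY, (pX i)⁻¹ = (pY i)⁻¹

/-- Case b2): Case b) and the vectors `(1/p^X_i)_{i∈I}` and `(1/p^Y_i)_{i∈I}` differ. -/
def CaseB2 {m : ℕ} (pX pY : Fin m → ℝ) : Prop :=
  CaseB pX pY ∧ ¬ (∀ i ∈ Iset pX pY, (pX i)⁻¹ = (pY i)⁻¹)

/-- The set `K_{Λ²}` of maximizers of `f` over `Λ²`. -/
def Kset {m : ℕ} (pX pY : Fin m → ℝ) : Set ((Fin m → ℝ) × (Fin m → ℝ)) :=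
  {l ∈ Lam m ×ˢ Lam m | fobj pX pY l = emax pX pY}

/-- `p^X_max`. -/
def pXmax {m : ℕ} (pX : Fin m → ℝ) : ℝ := ⨆ i, pX i

/-- The set `J` (Case a)). -/
def Jset {m : ℕ} (pX pY : Fin m → ℝ) : Set (Fin m → ℝ) :=
  {l ∈ Lam m | (∀ i ∉ Iset pX pY, l i = 0) ∧
    (∑ i ∈ Finset.univ.filter (· ∈ Iset pX pY), l i / pY i) ≤ 1 / pXmax pX}

/-- `E = {x : Σ_i x_i = 0}`. -/
def Eset (m : ℕ) : Set (Fin m → ℝ) := {x | ∑ i, x i = 0}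

/-- `E' = {x ∈ E : x_i ≥ 0 for i ∉ I}`. -/
def E'set {m : ℕ} (pX pY : Fin m → ℝ) : Set (Fin m → ℝ) :=
  {x ∈ Eset m | ∀ i ∉ Iset pX pY, 0 ≤ x i}

/-- The function `𝔪` of Lemma 1.4. -/
def mfrak {m : ℕ} (pX pY : Fin m → ℝ) (ν : (Fin m → ℝ) × (Fin m → ℝ)) : ℝ :=
  sSup ((fun x : (Fin m → ℝ) × (Fin m → ℝ) =>
      ∑ i, min (pX i * x.1 i + ν.1 i) (pY i * x.2 i + ν.2 i)) ''
    (E'set pX pY ×ˢ E'set pX pY))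

/-- Partial sum `λ_1 + … + λ_i`. -/
def psumLe {m : ℕ} (l : Fin m → ℝ) (i : Fin m) : ℝ :=
  ∑ j ∈ Finset.univ.filter (· ≤ i), l j

/-- Partial sum `λ_1 + … + λ_{i-1}`. -/
def psumLt {m : ℕ} (l : Fin m → ℝ) (i : Fin m) : ℝ :=
  ∑ j ∈ Finset.univ.filter (· < i), l j

/-- `e(i,j)`. -/
def eij {m : ℕ} (pX pY : Fin m → ℝ) (i j : Fin m) : ℝ :=
  (pX i * pY i * (pX j - pY j) + pX j * pY j * (pY i - pX i)) /
    (pY i * pX j - pX i * pY j)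

/-- The set `S` of admissible pairs `(i,j)` in the representation of `e_max`. -/
def Sset {m : ℕ} (pX pY : Fin m → ℝ) : Set (Fin m × Fin m) :=
  {ij | pX ij.1 < pX ij.2 ∧ pY ij.2 < pY ij.1 ∧ pX ij.1 < pY ij.1 ∧ pY ij.2 < pX ij.2}

/-- `e_1 = max_i min(p^X_i, p^Y_i)`. -/
def e1 {m : ℕ} (pX pY : Fin m → ℝ) : ℝ := ⨆ i, min (pX i) (pY i)

/-- `e_2 = max_{(i,j)∈S} e(i,j)` (with `sSup ∅ = 0` when `S` is empty). -/
def e2 {m : ℕ} (pX pY : Fin m → ℝ) : ℝ :=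
  sSup ((fun ij : Fin m × Fin m => eij pX pY ij.1 ij.2) '' Sset pX pY)


namespace LCIAux

variable {m : ℕ}

def Valid (n : ℕ) (X Y : ℕ → Fin m) (r : ℕ) : Prop :=
  ∃ i j : Fin r → ℕ, StrictMono i ∧ StrictMono j ∧
    (∀ s, i s < n) ∧ (∀ s, j s < n) ∧
    (∀ s, X (i s) = Y (j s)) ∧ Monotone (X ∘ i) ∧ Monotone (Y ∘ j)

lemma LCI_eq_sSup (n : ℕ) (X Y : ℕ → Fin m) : LCI m n X Y = sSup {r | Valid n X Y r} := rfl

lemma valid_zero (n : ℕ) (X Y : ℕ → Fin m) : Valid n X Y 0 := by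
  refine ⟨Fin.elim0, Fin.elim0, ?_, ?_, ?_, ?_, ?_, ?_, ?_⟩ <;>
    first
      | (intro a; exact a.elim0)
      | (intro a b _; exact a.elim0)

lemma valid_le {n : ℕ} {X Y : ℕ → Fin m} {r : ℕ} (h : Valid n X Y r) : r ≤ n := by
  obtain ⟨i, j, hi, hj, hin, hjn, _, _, _⟩ := h
  have := Finset.card_le_card_of_injOn (s := (Finset.univ : Finset (Fin r)))
    (t := Finset.range n) i (fun s _ => Finset.mem_range.2 (hin s)) (hi.injective.injOn)
  simpa using this

lemma valid_bddAbove (n : ℕ) (X Y : ℕ → Fin m) : BddAbove {r | Valid n X Y r} :=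
  ⟨n, fun _ hr => valid_le hr⟩

lemma LCI_le_n (n : ℕ) (X Y : ℕ → Fin m) : LCI m n X Y ≤ n :=
  csSup_le ⟨0, valid_zero n X Y⟩ (fun _ hr => valid_le hr)

/-- counting occurrences of letter `t` in `Z` on `[p, q)` -/
def cnt (Z : ℕ → Fin m) (t : Fin m) (p q : ℕ) : ℕ :=
  ((Finset.Ico p q).filter (fun k => Z k = t)).card

def score (X Y : ℕ → Fin m) (a b : ℕ → ℕ) : ℕ :=
  ∑ t : Fin m, min (cnt X t (a t) (a (t + 1))) (cnt Y t (b t) (b (t + 1)))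

lemma cnt_split {Z : ℕ → Fin m} {t : Fin m} {p q r : ℕ} (h1 : p ≤ q) (h2 : q ≤ r) :
    cnt Z t p r = cnt Z t p q + cnt Z t q r := by
  unfold cnt
  rw [← Finset.Ico_union_Ico_eq_Ico h1 h2, Finset.filter_union,
    Finset.card_union_of_disjoint]
  exact (Finset.Ico_disjoint_Ico_consecutive p q r).mono
    (Finset.filter_subset _ _) (Finset.filter_subset _ _)

lemma cnt_le_sub {Z : ℕ → Fin m} {t : Fin m} {p q : ℕ} : cnt Z t p q ≤ q - p := by
  calc cnt Z t p q ≤ (Finset.Ico p q).card := Finset.card_filter_le _ _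
    _ = q - p := Nat.card_Ico p q

lemma cnt_overflow {Z : ℕ → Fin m} {t : Fin m} {p q p' q' : ℕ} (hp : p' ≤ p) :
    cnt Z t p q ≤ cnt Z t p' q' + (q - q') := by
  have hsub : Finset.Ico p q ⊆ Finset.Ico p' q' ∪ Finset.Ico q' q := by
    intro k hk
    rw [Finset.mem_Ico] at hk
    rcases lt_or_ge k q' with h | h
    · exact Finset.mem_union_left _ (Finset.mem_Ico.2 ⟨le_trans hp hk.1, h⟩)
    · exact Finset.mem_union_right _ (Finset.mem_Ico.2 ⟨h, hk.2⟩)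
  calc cnt Z t p q ≤ ((Finset.Ico p' q' ∪ Finset.Ico q' q).filter (fun k => Z k = t)).card :=
        Finset.card_le_card (Finset.filter_subset_filter _ hsub)
    _ ≤ cnt Z t p' q' + ((Finset.Ico q' q).filter (fun k => Z k = t)).card := by
        rw [Finset.filter_union]; exact Finset.card_union_le _ _
    _ ≤ cnt Z t p' q' + (q - q') := by
        refine Nat.add_le_add_left ?_ _
        calc ((Finset.Ico q' q).filter (fun k => Z k = t)).card ≤ (Finset.Ico q' q).card :=
            Finset.card_filter_le _ _
          _ = q - q' := Nat.card_Ico q' q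

section Append

variable {r1 r2 : ℕ} {α : Type*} [Preorder α]

lemma append_apply_lt (f : Fin r1 → α) (g : Fin r2 → α) (s : Fin (r1 + r2)) (h : (s : ℕ) < r1) :
    Fin.append f g s = f ⟨s, h⟩ := by
  have hs : s = Fin.castAdd r2 ⟨s, h⟩ := by ext; rfl
  conv_lhs => rw [hs]
  rw [Fin.append_left]

lemma append_apply_ge (f : Fin r1 → α) (g : Fin r2 → α) (s : Fin (r1 + r2)) (h : r1 ≤ (s : ℕ)) :
    Fin.append f g s = g ⟨(s : ℕ) - r1, by omega⟩ := by
  have hs : s = Fin.natAdd r1 ⟨(s : ℕ) - r1, by omega⟩ := by ext; simp; omega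
  conv_lhs => rw [hs]
  rw [Fin.append_right]

lemma append_strictMono {f : Fin r1 → α} {g : Fin r2 → α}
    (hf : StrictMono f) (hg : StrictMono g) (hfg : ∀ s t, f s < g t) :
    StrictMono (Fin.append f g) := by
  intro s t hst
  have hst' : (s : ℕ) < (t : ℕ) := hst
  rcases lt_or_ge (s : ℕ) r1 with hs | hs <;> rcases lt_or_ge (t : ℕ) r1 with ht | ht
  · rw [append_apply_lt f g s hs, append_apply_lt f g t ht]
    exact hf (by simpa using hst')
  · rw [append_apply_lt f g s hs, append_apply_ge f g t ht]
    exact hfg _ _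
  · omega
  · rw [append_apply_ge f g s hs, append_apply_ge f g t ht]
    exact hg (by simp; omega)

lemma append_monotone {f : Fin r1 → α} {g : Fin r2 → α}
    (hf : Monotone f) (hg : Monotone g) (hfg : ∀ s t, f s ≤ g t) :
    Monotone (Fin.append f g) := by
  intro s t hst
  have hst' : (s : ℕ) ≤ (t : ℕ) := hst
  rcases lt_or_ge (s : ℕ) r1 with hs | hs <;> rcases lt_or_ge (t : ℕ) r1 with ht | ht
  · rw [append_apply_lt f g s hs, append_apply_lt f g t ht]
    exact hf (by simpa using hst')
  · rw [append_apply_lt f g s hs, append_apply_ge f g t ht]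
    exact hfg _ _
  · omega
  · rw [append_apply_ge f g s hs, append_apply_ge f g t ht]
    exact hg (by simp; omega)

end Append

section CompAppend
variable {r1 r2 : ℕ} {α β : Sort*}

lemma append_apply_lt' (f : Fin r1 → α) (g : Fin r2 → α) (s : Fin (r1 + r2)) (h : (s : ℕ) < r1) :
    Fin.append f g s = f ⟨s, h⟩ := by
  have hs : s = Fin.castAdd r2 ⟨s, h⟩ := by ext; rfl
  conv_lhs => rw [hs]
  rw [Fin.append_left]

lemma append_apply_ge' (f : Fin r1 → α) (g : Fin r2 → α) (s : Fin (r1 + r2)) (h : r1 ≤ (s : ℕ)) :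
    Fin.append f g s = g ⟨(s : ℕ) - r1, by omega⟩ := by
  have hs : s = Fin.natAdd r1 ⟨(s : ℕ) - r1, by omega⟩ := by ext; simp; omega
  conv_lhs => rw [hs]
  rw [Fin.append_right]

lemma comp_append (h : α → β) (f : Fin r1 → α) (g : Fin r2 → α) :
    h ∘ Fin.append f g = Fin.append (h ∘ f) (h ∘ g) := by
  funext s
  rcases lt_or_ge (s : ℕ) r1 with hs | hs
  · simp only [Function.comp_apply, append_apply_lt' f g s hs,
      append_apply_lt' (h ∘ f) (h ∘ g) s hs, Function.comp_apply]
  · simp only [Function.comp_apply, append_apply_ge' f g s hs,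
      append_apply_ge' (h ∘ f) (h ∘ g) s hs, Function.comp_apply]

end CompAppend

/-- `min` of the two counts of letter `t` in block `t`, as a function of `t : ℕ`. -/
def cmin (X Y : ℕ → Fin m) (a b : ℕ → ℕ) (t : ℕ) : ℕ :=
  if h : t < m then
    min (cnt X ⟨t, h⟩ (a t) (a (t + 1))) (cnt Y ⟨t, h⟩ (b t) (b (t + 1)))
  else 0

lemma score_eq_sum_cmin (X Y : ℕ → Fin m) (a b : ℕ → ℕ) :
    score X Y a b = ∑ t ∈ Finset.range m, cmin X Y a b t := by
  rw [← Fin.sum_univ_eq_sum_range]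
  exact Finset.sum_congr rfl (fun t _ => by simp [cmin, t.isLt])

lemma exists_chain (X Y : ℕ → Fin m) (a b : ℕ → ℕ)
    (hma : Monotone a) (hmb : Monotone b) :
    ∀ T, T ≤ m →
    ∃ i j : Fin (∑ t ∈ Finset.range T, cmin X Y a b t) → ℕ,
      StrictMono i ∧ StrictMono j ∧
      (∀ s, i s < a T) ∧ (∀ s, j s < b T) ∧
      (∀ s, X (i s) = Y (j s)) ∧ Monotone (X ∘ i) ∧ Monotone (Y ∘ j) ∧
      (∀ s, ((X (i s)) : ℕ) < T) := by
  intro T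
  induction T with
  | zero =>
    intro _
    have h0 : ∀ s : Fin (∑ t ∈ Finset.range 0, cmin X Y a b t), False := by
      intro s; have := s.isLt; simp at this
    refine ⟨fun _ => 0, fun _ => 0, ?_, ?_, ?_, ?_, ?_, ?_, ?_, ?_⟩ <;>
      (intro s; exact (h0 s).elim)
  | succ T ih =>
    intro hT1
    have hTm : T < m := hT1
    obtain ⟨i, j, hi, hj, hia, hjb, hXYe, hXi, hYj, hval⟩ := ih (le_of_lt hTm)
    set u : Fin m := ⟨T, hTm⟩ with hu
    set F := (Finset.Ico (a T) (a (T + 1))).filter (fun k => X k = u) with hF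
    set G := (Finset.Ico (b T) (b (T + 1))).filter (fun k => Y k = u) with hG
    have hcF : cmin X Y a b T ≤ F.card := by
      rw [cmin, dif_pos hTm]; exact min_le_left _ _
    have hcG : cmin X Y a b T ≤ G.card := by
      rw [cmin, dif_pos hTm]; exact min_le_right _ _
    set f : Fin (cmin X Y a b T) → ℕ := fun s => F.orderEmbOfFin rfl (Fin.castLE hcF s) with hfd
    set g : Fin (cmin X Y a b T) → ℕ := fun s => G.orderEmbOfFin rfl (Fin.castLE hcG s) with hgd
    have hfF : ∀ s, f s ∈ F := fun s => Finset.orderEmbOfFin_mem F rfl _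
    have hgG : ∀ s, g s ∈ G := fun s => Finset.orderEmbOfFin_mem G rfl _
    have hfa : ∀ s, a T ≤ f s ∧ f s < a (T + 1) := by
      intro s; have := hfF s; rw [hF, Finset.mem_filter, Finset.mem_Ico] at this
      exact this.1
    have hgb : ∀ s, b T ≤ g s ∧ g s < b (T + 1) := by
      intro s; have := hgG s; rw [hG, Finset.mem_filter, Finset.mem_Ico] at this
      exact this.1
    have hXf : ∀ s, X (f s) = u := by
      intro s; have := hfF s; rw [hF, Finset.mem_filter] at this; exact this.2
    have hYg : ∀ s, Y (g s) = u := by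
      intro s; have := hgG s; rw [hG, Finset.mem_filter] at this; exact this.2
    have hf : StrictMono f := by
      intro s t hst
      exact (F.orderEmbOfFin rfl).strictMono (show ((Fin.castLE hcF s) : ℕ) < ((Fin.castLE hcF t) : ℕ) from hst)
    have hg : StrictMono g := by
      intro s t hst
      exact (G.orderEmbOfFin rfl).strictMono (show ((Fin.castLE hcG s) : ℕ) < ((Fin.castLE hcG t) : ℕ) from hst)
    rw [Finset.sum_range_succ]
    refine ⟨Fin.append i f, Fin.append j g, ?_, ?_, ?_, ?_, ?_, ?_, ?_, ?_⟩
    · exact append_strictMono hi hf (fun s t => lt_of_lt_of_le (hia s) (hfa t).1)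
    · exact append_strictMono hj hg (fun s t => lt_of_lt_of_le (hjb s) (hgb t).1)
    · intro s
      rcases lt_or_ge (s : ℕ) (∑ t ∈ Finset.range T, cmin X Y a b t) with hs | hs
      · rw [append_apply_lt' i f s hs]
        exact lt_of_lt_of_le (hia _) (hma (Nat.le_succ T))
      · rw [append_apply_ge' i f s hs]
        exact (hfa _).2
    · intro s
      rcases lt_or_ge (s : ℕ) (∑ t ∈ Finset.range T, cmin X Y a b t) with hs | hs
      · rw [append_apply_lt' j g s hs]
        exact lt_of_lt_of_le (hjb _) (hmb (Nat.le_succ T))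
      · rw [append_apply_ge' j g s hs]
        exact (hgb _).2
    · intro s
      rcases lt_or_ge (s : ℕ) (∑ t ∈ Finset.range T, cmin X Y a b t) with hs | hs
      · rw [append_apply_lt' i f s hs, append_apply_lt' j g s hs]
        exact hXYe _
      · rw [append_apply_ge' i f s hs, append_apply_ge' j g s hs]
        rw [hXf _, hYg _]
    · rw [comp_append]
      refine append_monotone hXi ?_ ?_
      · intro s t _
        exact le_of_eq (by rw [Function.comp_apply, Function.comp_apply, hXf, hXf])
      · intro s t
        have h1 : ((X (i s)) : ℕ) < T := hval s
        have h2 : X (f t) = u := hXf t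
        rw [Function.comp_apply, Function.comp_apply, h2]
        exact le_of_lt (by rw [Fin.lt_def]; exact h1)
    · rw [comp_append]
      refine append_monotone hYj ?_ ?_
      · intro s t _
        exact le_of_eq (by rw [Function.comp_apply, Function.comp_apply, hYg, hYg])
      · intro s t
        have h1 : ((Y (j s)) : ℕ) < T := by rw [← hXYe s]; exact hval s
        rw [Function.comp_apply, Function.comp_apply, hYg]
        exact le_of_lt (by rw [Fin.lt_def]; exact h1)
    · intro s
      rcases lt_or_ge (s : ℕ) (∑ t ∈ Finset.range T, cmin X Y a b t) with hs | hs
      · rw [append_apply_lt' i f s hs]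
        exact lt_trans (hval _) (Nat.lt_succ_self T)
      · rw [append_apply_ge' i f s hs, hXf]
        exact Nat.lt_succ_self T

lemma score_valid (X Y : ℕ → Fin m) (n : ℕ) (a b : ℕ → ℕ)
    (hma : Monotone a) (hmb : Monotone b) (han : a m ≤ n) (hbn : b m ≤ n) :
    Valid n X Y (score X Y a b) := by
  obtain ⟨i, j, hi, hj, hia, hjb, hXYe, hXi, hYj, _⟩ := exists_chain X Y a b hma hmb m le_rfl
  rw [score_eq_sum_cmin]
  exact ⟨i, j, hi, hj, fun s => lt_of_lt_of_le (hia s) han,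
    fun s => lt_of_lt_of_le (hjb s) hbn, hXYe, hXi, hYj⟩

lemma score_le_LCI (X Y : ℕ → Fin m) (n : ℕ) (a b : ℕ → ℕ)
    (hma : Monotone a) (hmb : Monotone b) (han : a m ≤ n) (hbn : b m ≤ n) :
    score X Y a b ≤ LCI m n X Y :=
  le_csSup (valid_bddAbove n X Y) (score_valid X Y n a b hma hmb han hbn)

lemma valid_le_score {n r : ℕ} {X Y : ℕ → Fin m} (h : Valid n X Y r) :
    ∃ a b : ℕ → ℕ, Monotone a ∧ Monotone b ∧ (∀ t, a t ≤ n) ∧ (∀ t, b t ≤ n) ∧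
      r ≤ score X Y a b := by
  obtain ⟨i, j, hi, hj, hin, hjn, hXYe, hXi, hYj⟩ := h
  set A : ℕ → Finset (Fin r) := fun t => Finset.univ.filter (fun s => t ≤ ((X (i s)) : ℕ))
    with hA
  set B : ℕ → Finset (Fin r) := fun t => Finset.univ.filter (fun s => t ≤ ((Y (j s)) : ℕ))
    with hB
  set a : ℕ → ℕ := fun t => if h : (A t).Nonempty then i ((A t).min' h) else n with ha
  set b : ℕ → ℕ := fun t => if h : (B t).Nonempty then j ((B t).min' h) else n with hb
  have haeq : ∀ t, a t = if h : (A t).Nonempty then i ((A t).min' h) else n := fun t => rfl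
  have hbeq : ∀ t, b t = if h : (B t).Nonempty then j ((B t).min' h) else n := fun t => rfl
  have hasub : ∀ {t t' : ℕ}, t ≤ t' → A t' ⊆ A t := by
    intro t t' htt s hs
    rw [hA, Finset.mem_filter] at hs ⊢
    exact ⟨hs.1, le_trans htt hs.2⟩
  have hbsub : ∀ {t t' : ℕ}, t ≤ t' → B t' ⊆ B t := by
    intro t t' htt s hs
    rw [hB, Finset.mem_filter] at hs ⊢
    exact ⟨hs.1, le_trans htt hs.2⟩
  have han : ∀ t, a t ≤ n := by
    intro t; rw [haeq]
    by_cases h : (A t).Nonempty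
    · rw [dif_pos h]; exact le_of_lt (hin _)
    · rw [dif_neg h]
  have hbn : ∀ t, b t ≤ n := by
    intro t; rw [hbeq]
    by_cases h : (B t).Nonempty
    · rw [dif_pos h]; exact le_of_lt (hjn _)
    · rw [dif_neg h]
  have hma : Monotone a := by
    intro t t' htt
    by_cases h' : (A t').Nonempty
    · have h : (A t).Nonempty := h'.mono (hasub htt)
      rw [haeq t, haeq t', dif_pos h, dif_pos h']
      exact hi.monotone (Finset.min'_le _ _ (hasub htt (Finset.min'_mem _ h')))
    · rw [haeq t', dif_neg h']
      exact han t
  have hmb : Monotone b := by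
    intro t t' htt
    by_cases h' : (B t').Nonempty
    · have h : (B t).Nonempty := h'.mono (hbsub htt)
      rw [hbeq t, hbeq t', dif_pos h, dif_pos h']
      exact hj.monotone (Finset.min'_le _ _ (hbsub htt (Finset.min'_mem _ h')))
    · rw [hbeq t', dif_neg h']
      exact hbn t
  have key1a : ∀ s : Fin r, a ((X (i s)) : ℕ) ≤ i s := by
    intro s
    have hmem : s ∈ A ((X (i s)) : ℕ) := by rw [hA, Finset.mem_filter]; exact ⟨Finset.mem_univ _, le_rfl⟩
    have hne : (A ((X (i s)) : ℕ)).Nonempty := ⟨s, hmem⟩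
    rw [haeq]
    rw [dif_pos hne]
    exact hi.monotone (Finset.min'_le _ _ hmem)
  have key2a : ∀ s : Fin r, i s < a (((X (i s)) : ℕ) + 1) := by
    intro s
    by_cases h : (A (((X (i s)) : ℕ) + 1)).Nonempty
    · rw [haeq]
      rw [dif_pos h]
      refine hi ?_
      by_contra hc
      push_neg at hc
      have := hXi hc
      have h2 : (((X (i s)) : ℕ) + 1) ≤ ((X (i ((A (((X (i s)) : ℕ) + 1)).min' h))) : ℕ) := by
        have hmm := Finset.min'_mem _ h
        exact (Finset.mem_filter.mp hmm).2
      have h3 : ((X (i ((A (((X (i s)) : ℕ) + 1)).min' h))) : ℕ) ≤ ((X (i s)) : ℕ) := this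
      omega
    · rw [haeq]
      rw [dif_neg h]
      exact hin s
  have key1b : ∀ s : Fin r, b ((Y (j s)) : ℕ) ≤ j s := by
    intro s
    have hmem : s ∈ B ((Y (j s)) : ℕ) := by rw [hB, Finset.mem_filter]; exact ⟨Finset.mem_univ _, le_rfl⟩
    have hne : (B ((Y (j s)) : ℕ)).Nonempty := ⟨s, hmem⟩
    rw [hbeq]
    rw [dif_pos hne]
    exact hj.monotone (Finset.min'_le _ _ hmem)
  have key2b : ∀ s : Fin r, j s < b (((Y (j s)) : ℕ) + 1) := by
    intro s
    by_cases h : (B (((Y (j s)) : ℕ) + 1)).Nonempty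
    · rw [hbeq]
      rw [dif_pos h]
      refine hj ?_
      by_contra hc
      push_neg at hc
      have := hYj hc
      have h2 : (((Y (j s)) : ℕ) + 1) ≤ ((Y (j ((B (((Y (j s)) : ℕ) + 1)).min' h))) : ℕ) := by
        have hmm := Finset.min'_mem _ h
        exact (Finset.mem_filter.mp hmm).2
      have h3 : ((Y (j ((B (((Y (j s)) : ℕ) + 1)).min' h))) : ℕ) ≤ ((Y (j s)) : ℕ) := this
      omega
    · rw [hbeq]
      rw [dif_neg h]
      exact hjn s
  refine ⟨a, b, hma, hmb, han, hbn, ?_⟩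
  -- fibers
  have hr : r = ∑ u : Fin m, (Finset.univ.filter (fun s : Fin r => X (i s) = u)).card := by
    have := Finset.card_eq_sum_card_fiberwise
      (s := (Finset.univ : Finset (Fin r))) (t := (Finset.univ : Finset (Fin m)))
      (f := fun s => X (i s)) (fun x _ => Finset.mem_univ _)
    simpa using this
  have hfibX : ∀ u : Fin m,
      (Finset.univ.filter (fun s : Fin r => X (i s) = u)).card ≤ cnt X u (a u) (a (u + 1)) := by
    intro u
    have := Finset.card_le_card_of_injOn
      (s := Finset.univ.filter (fun s : Fin r => X (i s) = u))
      (t := (Finset.Ico (a (u : ℕ)) (a ((u : ℕ) + 1))).filter (fun k => X k = u)) i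
      (fun s hs => by
        rw [Finset.mem_coe, Finset.mem_filter] at hs
        rw [Finset.mem_coe, Finset.mem_filter, Finset.mem_Ico]
        refine ⟨⟨?_, ?_⟩, hs.2⟩
        · rw [← hs.2]; exact key1a s
        · rw [← hs.2]; exact key2a s)
      (hi.injective.injOn)
    exact this
  have hfibY : ∀ u : Fin m,
      (Finset.univ.filter (fun s : Fin r => Y (j s) = u)).card ≤ cnt Y u (b u) (b (u + 1)) := by
    intro u
    have := Finset.card_le_card_of_injOn
      (s := Finset.univ.filter (fun s : Fin r => Y (j s) = u))
      (t := (Finset.Ico (b (u : ℕ)) (b ((u : ℕ) + 1))).filter (fun k => Y k = u)) j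
      (fun s hs => by
        rw [Finset.mem_coe, Finset.mem_filter] at hs
        rw [Finset.mem_coe, Finset.mem_filter, Finset.mem_Ico]
        refine ⟨⟨?_, ?_⟩, hs.2⟩
        · rw [← hs.2]; exact key1b s
        · rw [← hs.2]; exact key2b s)
      (hj.injective.injOn)
    exact this
  have hfibeq : ∀ u : Fin m, (Finset.univ.filter (fun s : Fin r => X (i s) = u))
      = (Finset.univ.filter (fun s : Fin r => Y (j s) = u)) := by
    intro u
    exact Finset.filter_congr (fun s _ => by rw [hXYe s])
  rw [hr]
  refine Finset.sum_le_sum (fun u _ => ?_)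
  refine le_min (hfibX u) ?_
  rw [hfibeq u]
  exact hfibY u


-- ===== Analysis module =====

lemma div_cast_le_div_cast {x y n : ℕ} (hxy : x ≤ y) : (x : ℝ) / n ≤ (y : ℝ) / n :=
  div_le_div_of_nonneg_right (by exact_mod_cast hxy) (Nat.cast_nonneg n)

lemma cnt_prefix_tendsto {Z : ℕ → Fin m} {t : Fin m} {p : ℝ}
    (h : Tendsto (fun k : ℕ => (cnt Z t 0 k : ℝ) / k) atTop (𝓝 p))
    (u : ℕ → ℕ) {θ : ℝ} (hθ : 0 ≤ θ)
    (hu : Tendsto (fun n : ℕ => (u n : ℝ) / n) atTop (𝓝 θ)) :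
    Tendsto (fun n : ℕ => (cnt Z t 0 (u n) : ℝ) / n) atTop (𝓝 (p * θ)) := by
  rcases eq_or_lt_of_le hθ with hθ0 | hθpos
  · rw [← hθ0, mul_zero]
    refine tendsto_of_tendsto_of_tendsto_of_le_of_le' tendsto_const_nhds
      (show Tendsto (fun n : ℕ => (u n : ℝ) / n) atTop (𝓝 0) from hθ0 ▸ hu) ?_ ?_
    · exact Eventually.of_forall (fun n => by positivity)
    · refine Eventually.of_forall (fun n => div_cast_le_div_cast ?_)
      have := cnt_le_sub (Z := Z) (t := t) (p := 0) (q := u n)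
      omega
  · have hutop : Tendsto u atTop atTop := by
      rw [tendsto_atTop]
      intro B
      have h1 : ∀ᶠ n : ℕ in atTop, θ / 2 < (u n : ℝ) / n :=
        hu.eventually (eventually_gt_nhds (by linarith))
      have h2 : ∀ᶠ n : ℕ in atTop, (2 * B / θ : ℝ) ≤ (n : ℝ) :=
        tendsto_natCast_atTop_atTop.eventually_ge_atTop _
      filter_upwards [h1, h2] with n hn1 hn2
      have hBle : (B : ℝ) ≤ (u n : ℝ) := by
        rcases Nat.eq_zero_or_pos n with h0 | hp
        · exfalso
          rw [h0] at hn1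
          simp at hn1
          linarith
        · have hn0 : (0 : ℝ) < n := by exact_mod_cast hp
          have hun : (θ / 2) * n ≤ (u n : ℝ) := le_of_lt ((lt_div_iff₀ hn0).mp hn1)
          have hB : (B : ℝ) = (θ / 2) * (2 * B / θ) := by field_simp
          calc (B : ℝ) = (θ / 2) * (2 * B / θ) := hB
            _ ≤ (θ / 2) * n := mul_le_mul_of_nonneg_left hn2 (by linarith)
            _ ≤ (u n : ℝ) := hun
      exact_mod_cast hBle
    have hcomp : Tendsto (fun n => (cnt Z t 0 (u n) : ℝ) / (u n)) atTop (𝓝 p) := h.comp hutop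
    refine (hcomp.mul hu).congr' ?_
    filter_upwards [hutop.eventually_ge_atTop 1, eventually_ge_atTop 1] with n hn hn'
    have h1 : ((u n : ℕ) : ℝ) ≠ 0 := by
      have : (1 : ℕ) ≤ u n := hn
      positivity
    have h2 : ((n : ℕ) : ℝ) ≠ 0 := by
      have : (1 : ℕ) ≤ n := hn'
      positivity
    field_simp

lemma cnt_block_tendsto {Z : ℕ → Fin m} {t : Fin m} {p : ℝ}
    (h : Tendsto (fun k : ℕ => (cnt Z t 0 k : ℝ) / k) atTop (𝓝 p))
    {u v : ℕ → ℕ} {θ θ' : ℝ} (hθ : 0 ≤ θ) (hθ' : θ ≤ θ')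
    (huv : ∀ n, u n ≤ v n)
    (hu : Tendsto (fun n : ℕ => (u n : ℝ) / n) atTop (𝓝 θ))
    (hv : Tendsto (fun n : ℕ => (v n : ℝ) / n) atTop (𝓝 θ')) :
    Tendsto (fun n : ℕ => (cnt Z t (u n) (v n) : ℝ) / n) atTop (𝓝 (p * (θ' - θ))) := by
  have h1 := cnt_prefix_tendsto h v (le_trans hθ hθ') hv
  have h2 := cnt_prefix_tendsto h u hθ hu
  have h3 := h1.sub h2
  rw [show p * θ' - p * θ = p * (θ' - θ) by ring] at h3
  refine h3.congr (fun n => ?_)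
  have hsplit := cnt_split (Z := Z) (t := t) (Nat.zero_le (u n)) (huv n)
  have hcast : (cnt Z t 0 (v n) : ℝ) = (cnt Z t 0 (u n) : ℝ) + (cnt Z t (u n) (v n) : ℝ) := by
    exact_mod_cast congrArg (fun x : ℕ => (x : ℝ)) hsplit
  rw [hcast]
  ring

lemma floor_div_tendsto {θ : ℝ} (hθ : 0 ≤ θ) :
    Tendsto (fun n : ℕ => ((⌊θ * n⌋₊ : ℕ) : ℝ) / n) atTop (𝓝 θ) := by
  refine tendsto_of_tendsto_of_tendsto_of_le_of_le'
    (g := fun n : ℕ => θ - 1 / (n : ℝ)) (h := fun _ : ℕ => θ) ?_ tendsto_const_nhds ?_ ?_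
  · simpa using tendsto_const_nhds.sub (tendsto_one_div_atTop_nhds_zero_nat (𝕜 := ℝ))
  · filter_upwards [eventually_ge_atTop 1] with n hn
    have hn0 : (0 : ℝ) < n := by exact_mod_cast hn
    have h1 : θ * n - 1 < (⌊θ * n⌋₊ : ℝ) := Nat.sub_one_lt_floor (θ * n)
    have h2 : (θ * n - 1) / n ≤ (⌊θ * n⌋₊ : ℝ) / n :=
      div_le_div_of_nonneg_right (le_of_lt h1) (le_of_lt hn0)
    calc θ - 1 / n = (θ * n - 1) / n := by field_simp
      _ ≤ _ := h2
  · filter_upwards [eventually_ge_atTop 1] with n hn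
    have hn0 : (0 : ℝ) < n := by exact_mod_cast hn
    have h1 : (⌊θ * n⌋₊ : ℝ) ≤ θ * n := Nat.floor_le (by positivity)
    calc (⌊θ * n⌋₊ : ℝ) / n ≤ (θ * n) / n := div_le_div_of_nonneg_right h1 (le_of_lt hn0)
      _ = θ := by field_simp


-- ===== emax facts =====
section Emax
variable {pX pY : Fin m → ℝ}

lemma fobj_bddAbove (hpX0 : ∀ i, 0 ≤ pX i) (hpXsum : ∑ i, pX i = 1) :
    BddAbove (fobj pX pY '' (Lam m ×ˢ Lam m)) := by
  refine ⟨1, fun x hx => ?_⟩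
  obtain ⟨l, hl, rfl⟩ := hx
  have hl1 : l.1 ∈ Lam m := hl.1
  calc fobj pX pY l ≤ ∑ i, pX i * l.1 i :=
        Finset.sum_le_sum (fun i _ => min_le_left _ _)
    _ ≤ ∑ i, l.1 i := by
        refine Finset.sum_le_sum (fun i _ => ?_)
        refine mul_le_of_le_one_left (hl1.1 i) ?_
        rw [← hpXsum]
        exact Finset.single_le_sum (fun j _ => hpX0 j) (Finset.mem_univ i)
    _ = 1 := hl1.2

lemma fobj_le_emax (hpX0 : ∀ i, 0 ≤ pX i) (hpXsum : ∑ i, pX i = 1)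
    {l : (Fin m → ℝ) × (Fin m → ℝ)} (hl : l ∈ Lam m ×ˢ Lam m) :
    fobj pX pY l ≤ emax pX pY :=
  le_csSup (fobj_bddAbove hpX0 hpXsum) ⟨l, hl, rfl⟩

lemma sum_min_le_emax (hm : 0 < m) (hpX0 : ∀ i, 0 ≤ pX i) (hpY0 : ∀ i, 0 ≤ pY i)
    (hpXsum : ∑ i, pX i = 1)
    (lX lY : Fin m → ℝ) (hX0 : ∀ t, 0 ≤ lX t) (hX1 : ∑ t, lX t ≤ 1)
    (hY0 : ∀ t, 0 ≤ lY t) (hY1 : ∑ t, lY t ≤ 1) :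
    (∑ t, min (pX t * lX t) (pY t * lY t)) ≤ emax pX pY := by
  set i0 : Fin m := ⟨0, hm⟩ with hi0
  set lX' : Fin m → ℝ := fun t => lX t + (if t = i0 then 1 - ∑ s, lX s else 0) with hlX'
  set lY' : Fin m → ℝ := fun t => lY t + (if t = i0 then 1 - ∑ s, lY s else 0) with hlY'
  have hXsum : ∑ t, lX' t = 1 := by
    rw [hlX', Finset.sum_add_distrib, Finset.sum_ite_eq' Finset.univ i0
      (fun _ => 1 - ∑ s, lX s)]
    simp
  have hYsum : ∑ t, lY' t = 1 := by
    rw [hlY', Finset.sum_add_distrib, Finset.sum_ite_eq' Finset.univ i0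
      (fun _ => 1 - ∑ s, lY s)]
    simp
  have hlX'eq : ∀ t, lX' t = lX t + (if t = i0 then 1 - ∑ s, lX s else 0) := fun t => rfl
  have hlY'eq : ∀ t, lY' t = lY t + (if t = i0 then 1 - ∑ s, lY s else 0) := fun t => rfl
  have hXmem : lX' ∈ Lam m := by
    refine ⟨fun i => ?_, hXsum⟩
    rw [hlX'eq i]
    by_cases h : i = i0
    · subst h
      rw [if_pos rfl]
      have := hX0 i0
      linarith
    · simp only [if_neg h, add_zero]
      exact hX0 i
  have hYmem : lY' ∈ Lam m := by
    refine ⟨fun i => ?_, hYsum⟩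
    rw [hlY'eq i]
    by_cases h : i = i0
    · subst h
      rw [if_pos rfl]
      have := hY0 i0
      linarith
    · simp only [if_neg h, add_zero]
      exact hY0 i
  have hle : ∀ t, min (pX t * lX t) (pY t * lY t) ≤ min (pX t * lX' t) (pY t * lY' t) := by
    intro t
    refine min_le_min ?_ ?_
    · refine mul_le_mul_of_nonneg_left ?_ (hpX0 t)
      rw [hlX'eq t]
      by_cases h : t = i0
      · subst h
        rw [if_pos rfl]
        linarith
      · simp [if_neg h]
    · refine mul_le_mul_of_nonneg_left ?_ (hpY0 t)
      rw [hlY'eq t]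
      by_cases h : t = i0
      · subst h
        rw [if_pos rfl]
        linarith
      · simp [if_neg h]
  calc (∑ t, min (pX t * lX t) (pY t * lY t))
      ≤ ∑ t, min (pX t * lX' t) (pY t * lY' t) := Finset.sum_le_sum (fun t _ => hle t)
    _ = fobj pX pY (lX', lY') := rfl
    _ ≤ emax pX pY := fobj_le_emax hpX0 hpXsum (Set.mem_prod.2 ⟨hXmem, hYmem⟩)

end Emax

-- ===== lower bound machinery =====
section Lower
variable {pX pY : Fin m → ℝ}

def cum (l : Fin m → ℝ) : ℕ → ℝ :=
  fun T => ∑ t ∈ Finset.univ.filter (fun t : Fin m => (t : ℕ) < T), l t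

lemma cum_nonneg {l : Fin m → ℝ} (h0 : ∀ t, 0 ≤ l t) (T : ℕ) : 0 ≤ cum l T :=
  Finset.sum_nonneg (fun t _ => h0 t)

lemma cum_mono {l : Fin m → ℝ} (h0 : ∀ t, 0 ≤ l t) : Monotone (cum l) := by
  intro T T' hTT
  refine Finset.sum_le_sum_of_subset_of_nonneg ?_ (fun t _ _ => h0 t)
  intro t ht
  rw [Finset.mem_filter] at ht ⊢
  exact ⟨ht.1, lt_of_lt_of_le ht.2 hTT⟩

lemma cum_le_one {l : Fin m → ℝ} (h0 : ∀ t, 0 ≤ l t) (h1 : ∑ t, l t = 1) (T : ℕ) :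
    cum l T ≤ 1 := by
  rw [← h1]
  exact Finset.sum_le_sum_of_subset_of_nonneg (Finset.filter_subset _ _) (fun t _ _ => h0 t)

lemma cum_m {l : Fin m → ℝ} (h1 : ∑ t, l t = 1) : cum l m = 1 := by
  rw [cum, Finset.filter_true_of_mem (fun t _ => t.isLt)]
  exact h1

lemma cum_succ_sub {l : Fin m → ℝ} {T : ℕ} (hT : T < m) :
    cum l (T + 1) - cum l T = l ⟨T, hT⟩ := by
  have hins : Finset.univ.filter (fun t : Fin m => (t : ℕ) < T + 1)
      = insert ⟨T, hT⟩ (Finset.univ.filter (fun t : Fin m => (t : ℕ) < T)) := by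
    ext t
    simp only [Finset.mem_filter, Finset.mem_insert, Finset.mem_univ, true_and, Fin.ext_iff]
    omega
  have hnotmem : (⟨T, hT⟩ : Fin m) ∉ Finset.univ.filter (fun t : Fin m => (t : ℕ) < T) := by
    simp
  rw [cum, cum, hins, Finset.sum_insert hnotmem]
  ring

/-- `score/n` along the boundaries `⌊cum l T * n⌋` converges to `fobj`. -/
lemma lower_score_tendsto (X Y : ℕ → Fin m)
    (hX : ∀ t : Fin m, Tendsto (fun k : ℕ => (cnt X t 0 k : ℝ) / k) atTop (𝓝 (pX t)))
    (hY : ∀ t : Fin m, Tendsto (fun k : ℕ => (cnt Y t 0 k : ℝ) / k) atTop (𝓝 (pY t)))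
    (lX lY : Fin m → ℝ) (hX0 : ∀ t, 0 ≤ lX t) (hY0 : ∀ t, 0 ≤ lY t) :
    Tendsto (fun n : ℕ =>
      (score X Y (fun T => ⌊cum lX T * n⌋₊) (fun T => ⌊cum lY T * n⌋₊) : ℝ) / n) atTop
      (𝓝 (∑ t, min (pX t * lX t) (pY t * lY t))) := by
  have hcast : ∀ n : ℕ, (score X Y (fun T => ⌊cum lX T * n⌋₊) (fun T => ⌊cum lY T * n⌋₊) : ℝ) / n
      = ∑ t : Fin m, min ((cnt X t ⌊cum lX (t : ℕ) * n⌋₊ ⌊cum lX ((t : ℕ) + 1) * n⌋₊ : ℝ) / n)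
          ((cnt Y t ⌊cum lY (t : ℕ) * n⌋₊ ⌊cum lY ((t : ℕ) + 1) * n⌋₊ : ℝ) / n) := by
    intro n
    rw [score, Nat.cast_sum, Finset.sum_div]
    refine Finset.sum_congr rfl (fun t _ => ?_)
    rw [Nat.cast_min, min_div_div_right (Nat.cast_nonneg n)]
  simp only [hcast]
  refine tendsto_finset_sum _ (fun t _ => ?_)
  have h1 := cnt_block_tendsto (h := hX t)
    (hθ := cum_nonneg hX0 (t : ℕ))
    (hθ' := cum_mono hX0 (Nat.le_succ (t : ℕ)))
    (huv := fun n => Nat.floor_le_floor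
      (mul_le_mul_of_nonneg_right (cum_mono hX0 (Nat.le_succ (t : ℕ))) (Nat.cast_nonneg n)))
    (hu := floor_div_tendsto (cum_nonneg hX0 (t : ℕ)))
    (hv := floor_div_tendsto (cum_nonneg hX0 ((t : ℕ) + 1)))
  have h2 := cnt_block_tendsto (h := hY t)
    (hθ := cum_nonneg hY0 (t : ℕ))
    (hθ' := cum_mono hY0 (Nat.le_succ (t : ℕ)))
    (huv := fun n => Nat.floor_le_floor
      (mul_le_mul_of_nonneg_right (cum_mono hY0 (Nat.le_succ (t : ℕ))) (Nat.cast_nonneg n)))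
    (hu := floor_div_tendsto (cum_nonneg hY0 (t : ℕ)))
    (hv := floor_div_tendsto (cum_nonneg hY0 ((t : ℕ) + 1)))
  have h3 := h1.min h2
  rw [cum_succ_sub t.isLt] at h3
  rw [cum_succ_sub t.isLt] at h3
  simpa using h3

end Lower


-- ===== grid machinery =====
section Grid
variable {pX pY : Fin m → ℝ}

def eC (K : ℕ) (c : Fin (m + 1) → Fin (K + 1)) : ℕ → ℝ :=
  fun T => ((c ⟨min T m, by omega⟩ : ℕ) : ℝ) / K

def gridA (K n : ℕ) (c : Fin (m + 1) → Fin (K + 1)) : ℕ → ℕ :=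
  fun T => ⌊eC K c T * n⌋₊

lemma eC_nonneg (K : ℕ) (c : Fin (m + 1) → Fin (K + 1)) (T : ℕ) : 0 ≤ eC K c T := by
  rw [eC]; positivity

lemma eC_le_one {K : ℕ} (hK : 1 ≤ K) (c : Fin (m + 1) → Fin (K + 1)) (T : ℕ) :
    eC K c T ≤ 1 := by
  rw [eC]
  rw [div_le_one (by exact_mod_cast hK)]
  exact_mod_cast Nat.lt_succ_iff.1 (c _).isLt

lemma eC_mono {K : ℕ} {c : Fin (m + 1) → Fin (K + 1)} (hc : Monotone c) : Monotone (eC K c) := by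
  intro T T' hTT
  rw [eC, eC]
  refine div_le_div_of_nonneg_right ?_ (Nat.cast_nonneg K)
  have : c ⟨min T m, by omega⟩ ≤ c ⟨min T' m, by omega⟩ := by
    refine hc ?_
    simp only [Fin.mk_le_mk]
    exact min_le_min hTT le_rfl
  exact_mod_cast this

lemma gridA_mono {K n : ℕ} {c : Fin (m + 1) → Fin (K + 1)} (hc : Monotone c) :
    Monotone (gridA K n c) := fun T T' h =>
  Nat.floor_le_floor (mul_le_mul_of_nonneg_right (eC_mono hc h) (Nat.cast_nonneg n))

lemma gridA_div_tendsto (K : ℕ) (c : Fin (m + 1) → Fin (K + 1)) (T : ℕ) :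
    Tendsto (fun n : ℕ => ((gridA K n c T : ℕ) : ℝ) / n) atTop (𝓝 (eC K c T)) :=
  floor_div_tendsto (eC_nonneg K c T)

/-- the limit score value of a grid configuration -/
def gridVal (pX pY : Fin m → ℝ) (K : ℕ) (c d : Fin (m + 1) → Fin (K + 1)) : ℝ :=
  ∑ t : Fin m, min (pX t * (eC K c ((t : ℕ) + 1) - eC K c (t : ℕ)))
    (pY t * (eC K d ((t : ℕ) + 1) - eC K d (t : ℕ)))

lemma grid_score_tendsto (X Y : ℕ → Fin m)
    (hX : ∀ t : Fin m, Tendsto (fun k : ℕ => (cnt X t 0 k : ℝ) / k) atTop (𝓝 (pX t)))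
    (hY : ∀ t : Fin m, Tendsto (fun k : ℕ => (cnt Y t 0 k : ℝ) / k) atTop (𝓝 (pY t)))
    (K : ℕ) (c d : Fin (m + 1) → Fin (K + 1)) (hc : Monotone c) (hd : Monotone d) :
    Tendsto (fun n : ℕ => (score X Y (gridA K n c) (gridA K n d) : ℝ) / n) atTop
      (𝓝 (gridVal pX pY K c d)) := by
  have hcast : ∀ n : ℕ, (score X Y (gridA K n c) (gridA K n d) : ℝ) / n
      = ∑ t : Fin m, min ((cnt X t (gridA K n c (t : ℕ)) (gridA K n c ((t : ℕ) + 1)) : ℝ) / n)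
          ((cnt Y t (gridA K n d (t : ℕ)) (gridA K n d ((t : ℕ) + 1)) : ℝ) / n) := by
    intro n
    rw [score, Nat.cast_sum, Finset.sum_div]
    refine Finset.sum_congr rfl (fun t _ => ?_)
    rw [Nat.cast_min, min_div_div_right (Nat.cast_nonneg n)]
  simp only [hcast]
  refine tendsto_finset_sum _ (fun t _ => ?_)
  have h1 := cnt_block_tendsto (h := hX t)
    (hθ := eC_nonneg K c (t : ℕ))
    (hθ' := eC_mono hc (Nat.le_succ (t : ℕ)))
    (huv := fun n => gridA_mono hc (Nat.le_succ (t : ℕ)))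
    (hu := gridA_div_tendsto K c (t : ℕ))
    (hv := gridA_div_tendsto K c ((t : ℕ) + 1))
  have h2 := cnt_block_tendsto (h := hY t)
    (hθ := eC_nonneg K d (t : ℕ))
    (hθ' := eC_mono hd (Nat.le_succ (t : ℕ)))
    (huv := fun n => gridA_mono hd (Nat.le_succ (t : ℕ)))
    (hu := gridA_div_tendsto K d (t : ℕ))
    (hv := gridA_div_tendsto K d ((t : ℕ) + 1))
  exact h1.min h2

lemma gridVal_le_emax (hm : 0 < m) (hpX0 : ∀ i, 0 ≤ pX i) (hpY0 : ∀ i, 0 ≤ pY i)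
    (hpXsum : ∑ i, pX i = 1) {K : ℕ} (hK : 1 ≤ K)
    (c d : Fin (m + 1) → Fin (K + 1)) (hc : Monotone c) (hd : Monotone d) :
    gridVal pX pY K c d ≤ emax pX pY := by
  refine sum_min_le_emax hm hpX0 hpY0 hpXsum _ _ ?_ ?_ ?_ ?_
  · intro t
    have := eC_mono hc (Nat.le_succ (t : ℕ))
    linarith
  · have htel : ∑ t : Fin m, (eC K c ((t : ℕ) + 1) - eC K c (t : ℕ))
        = eC K c m - eC K c 0 := by
      rw [Fin.sum_univ_eq_sum_range (fun i => eC K c (i + 1) - eC K c i) m]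
      exact Finset.sum_range_sub (eC K c) m
    rw [htel]
    have h1 := eC_le_one hK c m
    have h2 := eC_nonneg K c 0
    linarith
  · intro t
    have := eC_mono hd (Nat.le_succ (t : ℕ))
    linarith
  · have htel : ∑ t : Fin m, (eC K d ((t : ℕ) + 1) - eC K d (t : ℕ))
        = eC K d m - eC K d 0 := by
      rw [Fin.sum_univ_eq_sum_range (fun i => eC K d (i + 1) - eC K d i) m]
      exact Finset.sum_range_sub (eC K d) m
    rw [htel]
    have h1 := eC_le_one hK d m
    have h2 := eC_nonneg K d 0
    linarith

end Grid

-- ===== rounding =====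
section Round

lemma round_le {K n : ℕ} (hK : 1 ≤ K) (hn : 1 ≤ n) {v : ℕ} (hv : v ≤ n) :
    (⌊((K * v / n : ℕ) : ℝ) / K * n⌋₊ ≤ v) ∧
      ((v : ℝ) ≤ (⌊((K * v / n : ℕ) : ℝ) / K * n⌋₊ : ℝ) + ((n : ℝ) / K + 1)) := by
  have hKpos : (0 : ℝ) < K := by exact_mod_cast hK
  have hnpos : (0 : ℝ) < n := by exact_mod_cast hn
  set j : ℕ := K * v / n with hj
  constructor
  · have h1 : ((j : ℕ) : ℝ) ≤ (K * v : ℝ) / n := by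
      rw [hj]
      calc ((K * v / n : ℕ) : ℝ) ≤ ((K * v : ℕ) : ℝ) / n := Nat.cast_div_le
        _ = (K * v : ℝ) / n := by push_cast; ring
    have h2 : (j : ℝ) / K * n ≤ (v : ℝ) := by
      rw [div_mul_eq_mul_div, div_le_iff₀ hKpos]
      calc (j : ℝ) * n ≤ ((K * v : ℝ) / n) * n := by
            exact mul_le_mul_of_nonneg_right h1 (le_of_lt hnpos)
        _ = (K : ℝ) * v := by field_simp
        _ = (v : ℝ) * K := by ring
    calc ⌊(j : ℝ) / K * n⌋₊ ≤ ⌊((v : ℕ) : ℝ)⌋₊ := Nat.floor_le_floor h2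
      _ = v := Nat.floor_natCast v
  · set r : ℕ := K * v % n with hr
    have hdm : n * j + r = K * v := Nat.div_add_mod (K * v) n
    have hrn : r < n := Nat.mod_lt _ (by omega)
    have hjn : (j : ℝ) * n = (K : ℝ) * v - r := by
      have : (n : ℝ) * j + r = (K : ℝ) * v := by exact_mod_cast hdm
      linarith
    have hflo : (j : ℝ) / K * n - 1 < (⌊(j : ℝ) / K * n⌋₊ : ℝ) :=
      Nat.sub_one_lt_floor _
    have heq : (j : ℝ) / K * n = ((K : ℝ) * v - r) / K := by
      rw [div_mul_eq_mul_div, hjn]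
    have hrK : (r : ℝ) / K ≤ (n : ℝ) / K :=
      div_le_div_of_nonneg_right (by exact_mod_cast le_of_lt hrn) (le_of_lt hKpos)
    have hval : ((K : ℝ) * v - r) / K = (v : ℝ) - (r : ℝ) / K := by field_simp
    have h5 : (j : ℝ) / K * n = (v : ℝ) - (r : ℝ) / K := heq.trans hval
    linarith [hflo, hrK, h5]

lemma round_bound (K n : ℕ) (hK : 1 ≤ K) (hn : 1 ≤ n) (X Y : ℕ → Fin m) :
    ∃ c d : Fin (m + 1) → Fin (K + 1), Monotone c ∧ Monotone d ∧
      (LCI m n X Y : ℝ) ≤ (score X Y (gridA K n c) (gridA K n d) : ℝ)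
        + 2 * m * ((n : ℝ) / K + 1) := by
  have hmem : Valid n X Y (LCI m n X Y) := by
    have := Nat.sSup_mem (s := {r | Valid n X Y r}) ⟨0, valid_zero n X Y⟩ (valid_bddAbove n X Y)
    exact this
  obtain ⟨a, b, hma, hmb, han, hbn, hr⟩ := valid_le_score hmem
  have hcb : ∀ v : ℕ, v ≤ n → K * v / n < K + 1 := by
    intro v hv
    have : K * v / n ≤ K * n / n := Nat.div_le_div_right (Nat.mul_le_mul_left K hv)
    rw [Nat.mul_div_cancel K (by omega : 0 < n)] at this
    omega
  set c : Fin (m + 1) → Fin (K + 1) := fun T => ⟨K * a (T : ℕ) / n, hcb _ (han _)⟩ with hc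
  set d : Fin (m + 1) → Fin (K + 1) := fun T => ⟨K * b (T : ℕ) / n, hcb _ (hbn _)⟩ with hd
  have hcmono : Monotone c := by
    intro T T' hTT
    rw [hc]
    simp only [Fin.mk_le_mk]
    exact Nat.div_le_div_right (Nat.mul_le_mul_left K (hma (Fin.le_def.1 hTT)))
  have hdmono : Monotone d := by
    intro T T' hTT
    rw [hd]
    simp only [Fin.mk_le_mk]
    exact Nat.div_le_div_right (Nat.mul_le_mul_left K (hmb (Fin.le_def.1 hTT)))
  have hgc : ∀ T : ℕ, gridA K n c T = ⌊((K * a (min T m) / n : ℕ) : ℝ) / K * n⌋₊ := fun T => rfl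
  have hgd : ∀ T : ℕ, gridA K n d T = ⌊((K * b (min T m) / n : ℕ) : ℝ) / K * n⌋₊ := fun T => rfl
  have hgcle : ∀ T : ℕ, gridA K n c T ≤ a (min T m) := by
    intro T
    rw [hgc T]
    exact (round_le hK hn (han (min T m))).1
  have hgcge : ∀ T : ℕ, (a (min T m) : ℝ) ≤ (gridA K n c T : ℝ) + ((n : ℝ) / K + 1) := by
    intro T
    rw [hgc T]
    exact (round_le hK hn (han (min T m))).2
  have hgdle : ∀ T : ℕ, gridA K n d T ≤ b (min T m) := by
    intro T
    rw [hgd T]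
    exact (round_le hK hn (hbn (min T m))).1
  have hgdge : ∀ T : ℕ, (b (min T m) : ℝ) ≤ (gridA K n d T : ℝ) + ((n : ℝ) / K + 1) := by
    intro T
    rw [hgd T]
    exact (round_le hK hn (hbn (min T m))).2
  refine ⟨c, d, hcmono, hdmono, ?_⟩
  -- per-letter inequality in ℕ
  have hper : ∀ t : Fin m,
      min (cnt X t (a (t : ℕ)) (a ((t : ℕ) + 1))) (cnt Y t (b (t : ℕ)) (b ((t : ℕ) + 1)))
      ≤ min (cnt X t (gridA K n c (t : ℕ)) (gridA K n c ((t : ℕ) + 1)))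
          (cnt Y t (gridA K n d (t : ℕ)) (gridA K n d ((t : ℕ) + 1)))
        + ((a ((t : ℕ) + 1) - gridA K n c ((t : ℕ) + 1))
          + (b ((t : ℕ) + 1) - gridA K n d ((t : ℕ) + 1))) := by
    intro t
    have hminT : min (t : ℕ) m = (t : ℕ) := Nat.min_eq_left (le_of_lt t.isLt)
    have hminT1 : min ((t : ℕ) + 1) m = (t : ℕ) + 1 := Nat.min_eq_left t.isLt
    have hx : cnt X t (a (t : ℕ)) (a ((t : ℕ) + 1))
        ≤ cnt X t (gridA K n c (t : ℕ)) (gridA K n c ((t : ℕ) + 1))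
          + (a ((t : ℕ) + 1) - gridA K n c ((t : ℕ) + 1)) := by
      refine cnt_overflow ?_
      have := hgcle (t : ℕ)
      rwa [hminT] at this
    have hy : cnt Y t (b (t : ℕ)) (b ((t : ℕ) + 1))
        ≤ cnt Y t (gridA K n d (t : ℕ)) (gridA K n d ((t : ℕ) + 1))
          + (b ((t : ℕ) + 1) - gridA K n d ((t : ℕ) + 1)) := by
      refine cnt_overflow ?_
      have := hgdle (t : ℕ)
      rwa [hminT] at this
    rcases le_total (cnt X t (gridA K n c (t : ℕ)) (gridA K n c ((t : ℕ) + 1)))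
      (cnt Y t (gridA K n d (t : ℕ)) (gridA K n d ((t : ℕ) + 1))) with h | h
    · rw [min_eq_left h]
      calc min _ _ ≤ cnt X t (a (t : ℕ)) (a ((t : ℕ) + 1)) := min_le_left _ _
        _ ≤ _ + (a ((t : ℕ) + 1) - gridA K n c ((t : ℕ) + 1)) := hx
        _ ≤ _ := by omega
    · rw [min_eq_right h]
      calc min _ _ ≤ cnt Y t (b (t : ℕ)) (b ((t : ℕ) + 1)) := min_le_right _ _
        _ ≤ _ + (b ((t : ℕ) + 1) - gridA K n d ((t : ℕ) + 1)) := hy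
        _ ≤ _ := by omega
  have hscore : score X Y a b ≤ score X Y (gridA K n c) (gridA K n d)
      + ∑ t : Fin m, ((a ((t : ℕ) + 1) - gridA K n c ((t : ℕ) + 1))
        + (b ((t : ℕ) + 1) - gridA K n d ((t : ℕ) + 1))) := by
    rw [score, score, ← Finset.sum_add_distrib]
    exact Finset.sum_le_sum (fun t _ => hper t)
  -- cast and bound the error sum
  have hDX : ∀ t : Fin m, ((a ((t : ℕ) + 1) - gridA K n c ((t : ℕ) + 1) : ℕ) : ℝ)
      ≤ (n : ℝ) / K + 1 := by
    intro t
    have hminT1 : min ((t : ℕ) + 1) m = (t : ℕ) + 1 := Nat.min_eq_left t.isLt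
    have h1 := hgcle ((t : ℕ) + 1)
    have h2 := hgcge ((t : ℕ) + 1)
    rw [hminT1] at h1 h2
    rw [Nat.cast_sub h1]
    linarith
  have hDY : ∀ t : Fin m, ((b ((t : ℕ) + 1) - gridA K n d ((t : ℕ) + 1) : ℕ) : ℝ)
      ≤ (n : ℝ) / K + 1 := by
    intro t
    have hminT1 : min ((t : ℕ) + 1) m = (t : ℕ) + 1 := Nat.min_eq_left t.isLt
    have h1 := hgdle ((t : ℕ) + 1)
    have h2 := hgdge ((t : ℕ) + 1)
    rw [hminT1] at h1 h2
    rw [Nat.cast_sub h1]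
    linarith
  have herr : ((∑ t : Fin m, ((a ((t : ℕ) + 1) - gridA K n c ((t : ℕ) + 1))
      + (b ((t : ℕ) + 1) - gridA K n d ((t : ℕ) + 1))) : ℕ) : ℝ)
      ≤ 2 * m * ((n : ℝ) / K + 1) := by
    push_cast
    calc (∑ t : Fin m, (((a ((t : ℕ) + 1) - gridA K n c ((t : ℕ) + 1) : ℕ) : ℝ)
          + ((b ((t : ℕ) + 1) - gridA K n d ((t : ℕ) + 1) : ℕ) : ℝ)))
        ≤ ∑ _t : Fin m, (((n : ℝ) / K + 1) + ((n : ℝ) / K + 1)) := by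
          exact Finset.sum_le_sum (fun t _ => add_le_add (hDX t) (hDY t))
      _ = 2 * m * ((n : ℝ) / K + 1) := by
          rw [Finset.sum_const, Finset.card_univ, Fintype.card_fin]
          push_cast
          ring
  have hr' : (LCI m n X Y : ℝ) ≤ (score X Y a b : ℝ) := by exact_mod_cast hr
  have hsc' : (score X Y a b : ℝ) ≤ (score X Y (gridA K n c) (gridA K n d) : ℝ)
      + ((∑ t : Fin m, ((a ((t : ℕ) + 1) - gridA K n c ((t : ℕ) + 1))
        + (b ((t : ℕ) + 1) - gridA K n d ((t : ℕ) + 1))) : ℕ) : ℝ) := by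
    exact_mod_cast hscore
  linarith

end Round


-- ===== deterministic convergence =====
section Det
variable {pX pY : Fin m → ℝ}

theorem det_tendsto (hm : 0 < m)
    (hpX0 : ∀ i, 0 ≤ pX i) (hpY0 : ∀ i, 0 ≤ pY i)
    (hpXsum : ∑ i, pX i = 1) (hpYsum : ∑ i, pY i = 1)
    (X Y : ℕ → Fin m)
    (hX : ∀ t : Fin m, Tendsto (fun k : ℕ => (cnt X t 0 k : ℝ) / k) atTop (𝓝 (pX t)))
    (hY : ∀ t : Fin m, Tendsto (fun k : ℕ => (cnt Y t 0 k : ℝ) / k) atTop (𝓝 (pY t))) :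
    Tendsto (fun n : ℕ => (LCI m n X Y : ℝ) / n) atTop (𝓝 (emax pX pY)) := by
  have hlo : ∀ ε : ℝ, 0 < ε → ∀ᶠ n : ℕ in atTop, emax pX pY - ε ≤ (LCI m n X Y : ℝ) / n := by
    intro ε hε
    have hne : (fobj pX pY '' (Lam m ×ˢ Lam m)).Nonempty :=
      ⟨_, ⟨(pX, pY), Set.mem_prod.2 ⟨⟨hpX0, hpXsum⟩, ⟨hpY0, hpYsum⟩⟩, rfl⟩⟩
    obtain ⟨x, hx, hlt⟩ := exists_lt_of_lt_csSup hne
      (show emax pX pY - ε < emax pX pY by linarith)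
    obtain ⟨l, hl, rfl⟩ := hx
    have hl1 : l.1 ∈ Lam m := hl.1
    have hl2 : l.2 ∈ Lam m := hl.2
    have htd := lower_score_tendsto X Y hX hY l.1 l.2 hl1.1 hl2.1
    have hfeq : (∑ t, min (pX t * l.1 t) (pY t * l.2 t)) = fobj pX pY l := rfl
    rw [hfeq] at htd
    have hev := htd.eventually (eventually_gt_nhds hlt)
    filter_upwards [hev] with n hn
    have hmono1 : Monotone (fun T => ⌊cum l.1 T * n⌋₊) := fun T T' h =>
      Nat.floor_le_floor (mul_le_mul_of_nonneg_right (cum_mono hl1.1 h) (Nat.cast_nonneg n))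
    have hmono2 : Monotone (fun T => ⌊cum l.2 T * n⌋₊) := fun T T' h =>
      Nat.floor_le_floor (mul_le_mul_of_nonneg_right (cum_mono hl2.1 h) (Nat.cast_nonneg n))
    have hendX : ⌊cum l.1 m * n⌋₊ ≤ n := by
      rw [cum_m hl1.2, one_mul, Nat.floor_natCast]
    have hendY : ⌊cum l.2 m * n⌋₊ ≤ n := by
      rw [cum_m hl2.2, one_mul, Nat.floor_natCast]
    have hsl := score_le_LCI X Y n _ _ hmono1 hmono2 hendX hendY
    have hdiv : (score X Y (fun T => ⌊cum l.1 T * n⌋₊) (fun T => ⌊cum l.2 T * n⌋₊) : ℝ) / n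
        ≤ (LCI m n X Y : ℝ) / n := div_cast_le_div_cast hsl
    linarith
  have hup : ∀ ε : ℝ, 0 < ε → ∀ᶠ n : ℕ in atTop, (LCI m n X Y : ℝ) / n ≤ emax pX pY + ε := by
    intro ε hε
    obtain ⟨K, hKgt⟩ := exists_nat_gt ((8 * ((m : ℝ) + 1)) / ε)
    have hKR : (0 : ℝ) < (8 * ((m : ℝ) + 1)) / ε := by positivity
    have hKpos : (0 : ℝ) < K := lt_trans hKR hKgt
    have hK1 : 1 ≤ K := by exact_mod_cast Nat.one_le_iff_ne_zero.2 (by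
      intro h
      rw [h] at hKpos
      simp at hKpos)
    have hKe : 2 * (m : ℝ) / K ≤ ε / 4 := by
      rw [div_le_div_iff₀ hKpos (by norm_num : (0:ℝ) < 4)]
      have h8 : 8 * ((m : ℝ) + 1) < K * ε := by
        rw [div_lt_iff₀ hε] at hKgt
        linarith
      nlinarith [hε.le, Nat.cast_nonneg (α := ℝ) m]
    have E1 : ∀ᶠ n : ℕ in atTop,
        ∀ cd : (Fin (m + 1) → Fin (K + 1)) × (Fin (m + 1) → Fin (K + 1)),
          Monotone cd.1 → Monotone cd.2 →
          (score X Y (gridA K n cd.1) (gridA K n cd.2) : ℝ) / n ≤ emax pX pY + ε / 4 := by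
      refine Filter.eventually_all.mpr ?_
      intro cd
      by_cases hcd : Monotone cd.1 ∧ Monotone cd.2
      · have htd := grid_score_tendsto X Y hX hY K cd.1 cd.2 hcd.1 hcd.2
        have hVle : gridVal pX pY K cd.1 cd.2 ≤ emax pX pY :=
          gridVal_le_emax hm hpX0 hpY0 hpXsum hK1 cd.1 cd.2 hcd.1 hcd.2
        have hev := htd.eventually (eventually_le_nhds
          (show gridVal pX pY K cd.1 cd.2 < emax pX pY + ε / 4 by linarith))
        exact hev.mono (fun n h _ _ => h)
      · exact Eventually.of_forall (fun n h1 h2 => absurd ⟨h1, h2⟩ hcd)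
    have E2 : ∀ᶠ n : ℕ in atTop, 2 * (m : ℝ) / n ≤ ε / 4 := by
      have := tendsto_const_div_atTop_nhds_zero_nat (2 * (m : ℝ))
      exact this.eventually (eventually_le_nhds (by linarith : (0:ℝ) < ε / 4))
    filter_upwards [E1, E2, eventually_ge_atTop 1] with n hE1 hE2 hn1
    obtain ⟨c, d, hc, hd, hineq⟩ := round_bound K n hK1 hn1 X Y
    have hnR : (0 : ℝ) < n := by exact_mod_cast hn1
    have h1 : (LCI m n X Y : ℝ) / n
        ≤ (score X Y (gridA K n c) (gridA K n d) : ℝ) / n + (2 * m * ((n : ℝ) / K + 1)) / n := by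
      rw [← add_div]
      exact div_le_div_of_nonneg_right hineq (le_of_lt hnR)
    have h2 := hE1 (c, d) hc hd
    have h3 : (2 * (m : ℝ) * ((n : ℝ) / K + 1)) / n = 2 * m / K + 2 * m / n := by
      field_simp
    rw [h3] at h1
    calc (LCI m n X Y : ℝ) / n
        ≤ (score X Y (gridA K n c) (gridA K n d) : ℝ) / n + (2 * m / K + 2 * m / n) := h1
      _ ≤ (emax pX pY + ε / 4) + (ε / 4 + ε / 4) := by
          refine add_le_add h2 (add_le_add hKe hE2)
      _ ≤ emax pX pY + ε := by linarith
  rw [Metric.tendsto_atTop]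
  intro ε hε
  have hA := hup (ε / 2) (by linarith)
  have hB := hlo (ε / 2) (by linarith)
  obtain ⟨N, hN⟩ :=eventually_atTop.1 (hA.and hB)
  refine ⟨N, fun n hn => ?_⟩
  obtain ⟨h1, h2⟩ := hN n hn
  rw [Real.dist_eq, abs_lt]
  constructor <;> linarith

end Det


-- ===== congruence & measurability =====
section Congr

lemma valid_congr {n r : ℕ} {X Y X' Y' : ℕ → Fin m} (hX : ∀ k, k < n → X k = X' k)
    (hY : ∀ k, k < n → Y k = Y' k) (h : Valid n X Y r) : Valid n X' Y' r := by
  obtain ⟨i, j, hi, hj, hin, hjn, he, hXi, hYj⟩ := h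
  have hXe : X' ∘ i = X ∘ i := funext fun s => (hX _ (hin s)).symm
  have hYe : Y' ∘ j = Y ∘ j := funext fun s => (hY _ (hjn s)).symm
  refine ⟨i, j, hi, hj, hin, hjn, ?_, ?_, ?_⟩
  · intro s; rw [← hX _ (hin s), ← hY _ (hjn s)]; exact he s
  · rw [hXe]; exact hXi
  · rw [hYe]; exact hYj

lemma LCI_congr {n : ℕ} {X Y X' Y' : ℕ → Fin m} (hX : ∀ k, k < n → X k = X' k)
    (hY : ∀ k, k < n → Y k = Y' k) : LCI m n X Y = LCI m n X' Y' := by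
  rw [LCI_eq_sSup, LCI_eq_sSup]
  congr 1
  ext r
  exact ⟨valid_congr hX hY,
    valid_congr (fun k hk => (hX k hk).symm) (fun k hk => (hY k hk).symm)⟩

end Congr

-- ===== probability =====
section Prob
variable {Ω : Type*} [MeasurableSpace Ω] {P : Measure Ω} [IsProbabilityMeasure P]

lemma meas_LCI (n : ℕ) (hm : 0 < m) (X Y : ℕ → Ω → Fin m)
    (hXm : ∀ k, Measurable (X k)) (hYm : ∀ k, Measurable (Y k)) :
    Measurable (fun ω => (LCI m n (fun k => X k ω) (fun k => Y k ω) : ℝ)) := by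
  classical
  set g : (Fin n → Fin m) × (Fin n → Fin m) → ℝ := fun v =>
    (LCI m n (fun k => if h : k < n then v.1 ⟨k, h⟩ else ⟨0, hm⟩)
      (fun k => if h : k < n then v.2 ⟨k, h⟩ else ⟨0, hm⟩) : ℝ) with hg
  have hT : Measurable (fun ω => ((fun k : Fin n => X k ω, fun k : Fin n => Y k ω) :
      (Fin n → Fin m) × (Fin n → Fin m))) :=
    (measurable_pi_lambda (fun ω (k : Fin n) => X (k : ℕ) ω) (fun k => hXm (k : ℕ))).prodMk
      (measurable_pi_lambda (fun ω (k : Fin n) => Y (k : ℕ) ω) (fun k => hYm (k : ℕ)))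
  have heq : (fun ω => (LCI m n (fun k => X k ω) (fun k => Y k ω) : ℝ))
      = fun ω => g (fun k : Fin n => X k ω, fun k : Fin n => Y k ω) := by
    funext ω
    rw [hg]
    norm_num
    refine LCI_congr ?_ ?_
    · intro k hk; rw [if_pos hk]
    · intro k hk; rw [if_pos hk]
  rw [heq]
  exact (measurable_of_countable g).comp hT

lemma slln_aux {Z : ℕ → Ω → Fin m} {p : Fin m → ℝ} (hp0 : ∀ i, 0 ≤ p i)
    (hZm : ∀ k, Measurable (Z k))
    (hlaw : ∀ k i, P (Z k ⁻¹' {i}) = ENNReal.ofReal (p i))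
    (hpair : Pairwise (fun k l => IndepFun (Z k) (Z l) P)) (t : Fin m) :
    ∀ᵐ ω ∂P, Tendsto (fun k : ℕ => (cnt (fun i => Z i ω) t 0 k : ℝ) / k) atTop (𝓝 (p t)) := by
  classical
  set g : Fin m → ℝ := fun v => if v = t then 1 else 0 with hg
  set f : ℕ → Ω → ℝ := fun k ω => g (Z k ω) with hf
  have hfeq : ∀ k ω, f k ω = if Z k ω = t then 1 else 0 := fun k ω => rfl
  have hfind : ∀ k, f k = (Z k ⁻¹' {t}).indicator (fun _ => (1 : ℝ)) := by
    intro k; funext ω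
    rw [hfeq]
    by_cases h : Z k ω = t
    · rw [if_pos h, Set.indicator_of_mem (by rwa [Set.mem_preimage, Set.mem_singleton_iff])]
    · rw [if_neg h, Set.indicator_of_notMem (by rwa [Set.mem_preimage, Set.mem_singleton_iff])]
  have hgm : Measurable g := measurable_of_countable g
  have hint : Integrable (f 0) P := by
    rw [hfind 0]
    exact (integrable_const (1 : ℝ)).indicator ((hZm 0) (measurableSet_singleton t))
  have hpairf : Pairwise (Function.onFun (fun u v : Ω → ℝ => IndepFun u v P) f) :=
    fun k l hkl => (hpair hkl).comp hgm hgm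
  have hmap : ∀ k, Measure.map (Z k) P = Measure.map (Z 0) P := by
    intro k
    have key : ∀ l : ℕ, ∀ s : Set (Fin m),
        P (Z l ⁻¹' s) = ∑ i ∈ s.toFinset, ENNReal.ofReal (p i) := by
      intro l s
      have hun : Z l ⁻¹' s = ⋃ i ∈ s.toFinset, Z l ⁻¹' {i} := by
        ext ω
        simp only [Set.mem_preimage, Set.mem_iUnion, Set.mem_toFinset, Set.mem_singleton_iff]
        constructor
        · intro h; exact ⟨Z l ω, h, rfl⟩
        · rintro ⟨i, hi, hh⟩; rw [hh]; exact hi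
      rw [hun, measure_biUnion_finset ?_ (fun i _ => (hZm l) (measurableSet_singleton i))]
      · exact Finset.sum_congr rfl (fun i _ => hlaw l i)
      · intro i _ j _ hij
        refine Set.disjoint_left.2 (fun ω h1 h2 => hij ?_)
        rw [Set.mem_preimage, Set.mem_singleton_iff] at h1 h2
        rw [← h1, ← h2]
    refine Measure.ext (fun s hs => ?_)
    rw [Measure.map_apply (hZm k) hs, Measure.map_apply (hZm 0) hs, key k s, key 0 s]
  have hident : ∀ k, IdentDistrib (f k) (f 0) P P := by
    intro k
    have hZid : IdentDistrib (Z k) (Z 0) P P :=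
      ⟨(hZm k).aemeasurable, (hZm 0).aemeasurable, hmap k⟩
    exact hZid.comp hgm
  have hmean : ∫ ω, f 0 ω ∂P = p t := by
    rw [hfind 0, integral_indicator_const (1 : ℝ) ((hZm 0) (measurableSet_singleton t)),
      measureReal_def, hlaw 0 t, ENNReal.toReal_ofReal (hp0 t)]
    simp
  have hsl := strong_law_ae f hint hpairf hident
  rw [hmean] at hsl
  refine hsl.mono (fun ω hω => ?_)
  refine hω.congr (fun k => ?_)
  have hcnt : (cnt (fun i => Z i ω) t 0 k : ℝ) = ∑ i ∈ Finset.range k, f i ω := by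
    rw [cnt, ← Finset.range_eq_Ico]
    rw [show (∑ i ∈ Finset.range k, f i ω) = ∑ i ∈ Finset.range k, if Z i ω = t then (1:ℝ) else 0
      from Finset.sum_congr rfl (fun i _ => hfeq i ω)]
    rw [Finset.sum_boole]
  rw [smul_eq_mul, ← hcnt, div_eq_inv_mul]

end Prob


end LCIAux

/-- `LCI_n / n` converges almost surely to `e_max`, and `E[LCI_n]/n → e_max`. -/
theorem lci_div_n_tendsto_emax
    {Ω : Type*} [MeasurableSpace Ω]
    (P : Measure Ω) [IsProbabilityMeasure P]
    (m : ℕ) (hm : 2 ≤ m)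
    (pX pY : Fin m → ℝ)
    (hpX : ∀ i, 0 < pX i) (hpY : ∀ i, 0 < pY i)
    (hpXsum : ∑ i, pX i = 1) (hpYsum : ∑ i, pY i = 1)
    (X Y : ℕ → Ω → Fin m)
    (hXY : IIDPair P X Y pX pY) :
    (∀ᵐ ω ∂P, Tendsto
        (fun n => (LCI m n (fun k => X k ω) (fun k => Y k ω) : ℝ) / n) atTop
        (𝓝 (emax pX pY))) ∧
      Tendsto
        (fun n => (∫ ω, (LCI m n (fun k => X k ω) (fun k => Y k ω) : ℝ) ∂P) / n) atTop
        (𝓝 (emax pX pY)) := by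
  obtain ⟨hXm, hYm, hXlaw, hYlaw, hind⟩ := hXY
  have hm0 : 0 < m := by omega
  have hXpair : Pairwise (fun k l => IndepFun (X k) (X l) P) := by
    intro k l hkl
    exact hind.indepFun (show (Sum.inl k : ℕ ⊕ ℕ) ≠ Sum.inl l from
      fun h => hkl (Sum.inl.inj h))
  have hYpair : Pairwise (fun k l => IndepFun (Y k) (Y l) P) := by
    intro k l hkl
    exact hind.indepFun (show (Sum.inr k : ℕ ⊕ ℕ) ≠ Sum.inr l from
      fun h => hkl (Sum.inr.inj h))
  have haeX : ∀ᵐ ω ∂P, ∀ t : Fin m, Tendsto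
      (fun k : ℕ => (LCIAux.cnt (fun i => X i ω) t 0 k : ℝ) / k) atTop (𝓝 (pX t)) :=
    MeasureTheory.ae_all_iff.2
      (fun t => LCIAux.slln_aux (fun i => (hpX i).le) hXm hXlaw hXpair t)
  have haeY : ∀ᵐ ω ∂P, ∀ t : Fin m, Tendsto
      (fun k : ℕ => (LCIAux.cnt (fun i => Y i ω) t 0 k : ℝ) / k) atTop (𝓝 (pY t)) :=
    MeasureTheory.ae_all_iff.2
      (fun t => LCIAux.slln_aux (fun i => (hpY i).le) hYm hYlaw hYpair t)
  have haeT : ∀ᵐ ω ∂P, Tendsto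
      (fun n : ℕ => (LCI m n (fun k => X k ω) (fun k => Y k ω) : ℝ) / n) atTop
      (𝓝 (emax pX pY)) := by
    filter_upwards [haeX, haeY] with ω h1 h2
    exact LCIAux.det_tendsto hm0 (fun i => (hpX i).le) (fun i => (hpY i).le)
      hpXsum hpYsum _ _ h1 h2
  refine ⟨haeT, ?_⟩
  have hmeas : ∀ n : ℕ,
      Measurable (fun ω => (LCI m n (fun k => X k ω) (fun k => Y k ω) : ℝ)) :=
    fun n => LCIAux.meas_LCI n hm0 X Y hXm hYm
  have hFm : ∀ n : ℕ, AEStronglyMeasurable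
      (fun ω => (LCI m n (fun k => X k ω) (fun k => Y k ω) : ℝ) / n) P :=
    fun n => ((hmeas n).div_const _).aestronglyMeasurable
  have hbound : ∀ n : ℕ, ∀ᵐ ω ∂P,
      ‖(LCI m n (fun k => X k ω) (fun k => Y k ω) : ℝ) / n‖ ≤ (1 : ℝ) := by
    intro n
    refine Filter.Eventually.of_forall (fun ω => ?_)
    rw [Real.norm_eq_abs, abs_div, Nat.abs_cast, Nat.abs_cast]
    rcases Nat.eq_zero_or_pos n with h0 | hp
    · subst h0; simp
    · rw [div_le_one (by exact_mod_cast hp)]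
      exact_mod_cast LCIAux.LCI_le_n n _ _
  have hdct := tendsto_integral_of_dominated_convergence (μ := P)
    (F := fun n ω => (LCI m n (fun k => X k ω) (fun k => Y k ω) : ℝ) / n)
    (f := fun _ => emax pX pY) (fun _ => (1 : ℝ)) hFm (integrable_const 1) hbound haeT
  have hconst : ∫ (_ : Ω), emax pX pY ∂P = emax pX pY := by simp
  rw [hconst] at hdct
  refine hdct.congr (fun n => ?_)
  exact integral_div _ _


end
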